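/- Let K be a Cantor set and f : K → Y a continuous surjection onto a metric space Y such that all but finitely many fibers of f are singletons and every fiber is finite. Then Y is a Cantor set. -/

import Mathlib

open Set Filter Topology

theorem stmt17 (X Y : Type*) [MetricSpace X] [CompactSpace X] [Nonempty X]
    (hXp : Perfect (Set.univ : Set X)) (hXtd : IsTotallyDisconnected (Set.univ : Set X))
    [MetricSpace Y]
    (f : X → Y) (hf : Continuous f) (hsurj : Function.Surjective f)
    (hfin : ∀ y : Y, (f ⁻¹' {y}).Finite)
    (hsing : {y : Y | (f ⁻¹' {y}).Nontrivial}.Finite) :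
    Nonempty Y ∧ CompactSpace Y ∧ Perfect (Set.univ : Set Y) ∧
      IsTotallyDisconnected (Set.univ : Set Y) := by
  haveI : TotallyDisconnectedSpace X := ⟨hXtd⟩
  haveI : Nonempty Y := Nonempty.map f ‹Nonempty X›
  have hcpt : CompactSpace Y := by
    rw [← isCompact_univ_iff, ← hsurj.range_eq]
    exact isCompact_range hf
  haveI := hcpt
  -- X has no isolated points ⇒ no finite nonempty open sets in X
  have hXacc : ∀ x : X, AccPt x (𝓟 (univ : Set X)) := fun x => hXp.acc x (mem_univ x)
  have hNoFinOpen : ∀ U : Set X, IsOpen U → U.Nonempty → ¬ U.Finite := by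
    intro U hU ⟨x, hx⟩ hUfin
    have h1 : IsClosed (U \ {x}) := (hUfin.diff).isClosed
    have h2 : IsOpen ({x} : Set X) := by
      have : ({x} : Set X) = U \ (U \ {x}) := by
        ext z
        constructor
        · rintro rfl; exact ⟨hx, fun h => h.2 rfl⟩
        · rintro ⟨hzU, hz⟩; by_contra hne; exact hz ⟨hzU, hne⟩
      rw [this]
      exact hU.sdiff h1
    rcases accPt_iff_nhds.1 (hXacc x) {x} (h2.mem_nhds rfl) with ⟨y, ⟨hy, -⟩, hy'⟩
    exact hy' hy
  -- closed map
  have hclosedmap : ∀ V : Set X, IsClosed V → IsClosed (f '' V) := fun V hV =>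
    (hV.isCompact.image hf).isClosed
  refine ⟨inferInstance, hcpt, ?_, ?_⟩
  · -- Perfect
    refine ⟨isClosed_univ, fun y _ => ?_⟩
    rw [accPt_iff_nhds]
    intro U hU
    by_contra h
    push_neg at h
    have hsub : U ∩ univ ⊆ {y} := fun z hz => h z hz
    have : f ⁻¹' U ⊆ f ⁻¹' {y} := fun x hx => hsub ⟨hx, mem_univ _⟩
    have hop : IsOpen (interior (f ⁻¹' U)) := isOpen_interior
    rcases hsurj y with ⟨x, hx⟩
    have hmem : x ∈ interior (f ⁻¹' U) := by
      rw [mem_interior_iff_mem_nhds]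
      exact hf.continuousAt.preimage_mem_nhds (hx ▸ hU)
    exact hNoFinOpen _ hop ⟨x, hmem⟩ (((hfin y).subset (interior_subset.trans this)))
  · -- totally disconnected
    intro C _ hC
    by_contra hns
    rw [not_subsingleton_iff] at hns
    have hCinf : C.Infinite := hC.infinite_of_nontrivial hns
    set F : Set Y := {y : Y | (f ⁻¹' {y}).Nontrivial} with hF
    obtain ⟨y₀, hy₀C, hy₀F⟩ : ∃ y₀ ∈ C, y₀ ∉ F := by
      rcases (hCinf.diff hsing).nonempty with ⟨y₀, hy₀⟩
      exact ⟨y₀, hy₀.1, hy₀.2⟩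
    obtain ⟨a, haC, b, hbC, hab⟩ := hns
    obtain ⟨b, hbC, hby₀⟩ : ∃ b ∈ C, b ≠ y₀ := by
      by_cases h : a = y₀
      · exact ⟨b, hbC, h ▸ hab.symm⟩
      · exact ⟨a, haC, h⟩
    -- fiber of y₀ is a singleton
    rcases hsurj y₀ with ⟨x₀, hx₀⟩
    have hfib : f ⁻¹' {y₀} ⊆ {x₀} := by
      intro z hz
      have hsub : (f ⁻¹' {y₀}).Subsingleton := not_nontrivial_iff.1 hy₀F
      exact hsub hz hx₀
    -- the finite bad set in X
    have hT : (f ⁻¹' F).Finite := by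
      have : f ⁻¹' F ⊆ ⋃ z ∈ F, f ⁻¹' {z} := by
        intro x hx; exact mem_biUnion hx rfl
      exact (hsing.biUnion fun z _ => hfin z).subset this
    have hx₀T : x₀ ∉ f ⁻¹' F := by simpa [hx₀] using hy₀F
    -- open set around x₀
    have hd : 0 < dist b y₀ := dist_pos.2 hby₀
    set O : Set X := f ⁻¹' (Metric.ball y₀ (dist b y₀)) \ (f ⁻¹' F) with hO
    have hOopen : IsOpen O := (Metric.isOpen_ball.preimage hf).sdiff hT.isClosed
    have hx₀O : x₀ ∈ O := ⟨by simp [hx₀, hd], hx₀T⟩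
    obtain ⟨V, hVclopen, hx₀V, hVO⟩ := compact_exists_isClopen_in_isOpen hOopen hx₀O
    set A := f '' V with hA
    set B := f '' Vᶜ with hB
    have hAcl : IsClosed A := hclosedmap V hVclopen.isClosed
    have hBcl : IsClosed B := hclosedmap Vᶜ hVclopen.isOpen.isClosed_compl
    -- C ⊆ Bᶜ ∪ Aᶜ, disjointly
    have hcover : C ⊆ Bᶜ ∪ Aᶜ := by
      intro z hz
      by_contra h
      simp only [mem_union, mem_compl_iff, not_or, not_not] at h
      obtain ⟨⟨x₂, hx₂V, hx₂⟩, ⟨x₁, hx₁V, hx₁⟩⟩ := h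
      have hne : x₁ ≠ x₂ := fun e => hx₂V (e ▸ hx₁V)
      have hzF : z ∈ F := ⟨x₁, by simp [Set.mem_preimage, hx₁], x₂, by simp [Set.mem_preimage, hx₂], hne⟩
      have : x₁ ∈ f ⁻¹' F := by rw [Set.mem_preimage, hx₁]; exact hzF
      exact (hVO hx₁V).2 this
    have hdisj : C ∩ (Bᶜ ∩ Aᶜ) = ∅ := by
      ext z
      simp only [mem_inter_iff, mem_compl_iff, mem_empty_iff_false, iff_false, not_and]
      intro _ hzB hzA
      rcases hsurj z with ⟨x, hx⟩
      by_cases hxV : x ∈ V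
      · exact hzA ⟨x, hxV, hx⟩
      · exact hzB ⟨x, hxV, hx⟩
    have hy₀U : y₀ ∈ Bᶜ := by
      rintro ⟨x, hxV, hx⟩
      have : x ∈ f ⁻¹' {y₀} := by rw [Set.mem_preimage, hx]; rfl
      have hxx : x = x₀ := hfib this
      exact hxV (hxx ▸ hx₀V)
    have hbU : b ∈ Aᶜ := by
      rintro ⟨x, hxV, hx⟩
      have : f x ∈ Metric.ball y₀ (dist b y₀) := (hVO hxV).1
      rw [hx] at this
      exact absurd this (by simp)
    rcases hC Bᶜ Aᶜ hBcl.isOpen_compl hAcl.isOpen_compl hcover ⟨y₀, hy₀C, hy₀U⟩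
      ⟨b, hbC, hbU⟩ with ⟨z, hz⟩
    rw [hdisj] at hz
    exact hz
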